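/- Fix 0 < u < 1 and 0 < p < 1. For s,t > 0, almost surely lim_{N→∞} G^(u)(⌊Ns⌋,⌊Nt⌋)/N = s·u + t·p(1-u)/(u + p(1-u)), where G^(u)(m,n) = Σ_{j=1}^{n} J(0,j) + Σ_{i=1}^{m} I(i,n), the J(0,j) are i.i.d. Bernoulli(p(1-u)/(u+p(1-u))) and, for each n, the (I(i,n))_{i≥1} are i.i.d. Bernoulli(u). -/

import Mathlib

open MeasureTheory ProbabilityTheory Filter

section Aux

variable {Ω : Type*} [MeasurableSpace Ω] {μ : Measure Ω} [IsProbabilityMeasure μ]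

lemma integrable_of_abs_le (f : Ω → ℝ) (hf : Measurable f) (C : ℝ) (h : ∀ x, |f x| ≤ C) :
    Integrable f μ :=
  ⟨hf.aestronglyMeasurable, HasFiniteIntegral.of_bounded (C := C) (ae_of_all _ fun x => by
    simpa [Real.norm_eq_abs] using h x)⟩

lemma step_bound (S Y : Ω → ℝ) (hS : Measurable S) (hY : Measurable Y)
    (cS : ℝ) (hcS : 0 ≤ cS) (hSbd : ∀ x, |S x| ≤ cS) (hYbd : ∀ x, |Y x| ≤ 1)
    (hScent : ∫ x, S x ∂μ = 0) (hYcent : ∫ x, Y x ∂μ = 0)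
    (hindep : ∀ k l : ℕ, IndepFun (fun x => S x ^ k) (fun x => Y x ^ l) μ)
    (m : ℝ) (hm : 0 ≤ m) (h2 : ∫ x, (S x)^2 ∂μ ≤ m) (h4 : ∫ x, (S x)^4 ∂μ ≤ 3*m^2) :
    (∫ x, (Y x + S x) ∂μ = 0) ∧ (∫ x, (Y x + S x)^2 ∂μ ≤ m + 1) ∧
      (∫ x, (Y x + S x)^4 ∂μ ≤ 3*(m+1)^2) := by
  have intS : ∀ k : ℕ, Integrable (fun x => S x ^ k) μ := fun k =>
    integrable_of_abs_le _ (hS.pow_const k) (cS ^ k) (fun x => by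
      rw [abs_pow]; exact pow_le_pow_left₀ (abs_nonneg _) (hSbd x) k)
  have intY : ∀ l : ℕ, Integrable (fun x => Y x ^ l) μ := fun l =>
    integrable_of_abs_le _ (hY.pow_const l) 1 (fun x => by
      rw [abs_pow]
      calc |Y x| ^ l ≤ 1 ^ l := pow_le_pow_left₀ (abs_nonneg _) (hYbd x) l
        _ = 1 := one_pow l)
  have intSY : ∀ k l : ℕ, Integrable (fun x => S x ^ k * Y x ^ l) μ := fun k l =>
    integrable_of_abs_le _ ((hS.pow_const k).mul (hY.pow_const l)) (cS ^ k) (fun x => by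
      rw [abs_mul, abs_pow, abs_pow]
      have h1 : |S x| ^ k ≤ cS ^ k := pow_le_pow_left₀ (abs_nonneg _) (hSbd x) k
      have h2 : |Y x| ^ l ≤ 1 := by
        calc |Y x| ^ l ≤ 1 ^ l := pow_le_pow_left₀ (abs_nonneg _) (hYbd x) l
          _ = 1 := one_pow l
      calc |S x| ^ k * |Y x| ^ l ≤ cS ^ k * 1 :=
            mul_le_mul h1 h2 (by positivity) (by positivity)
        _ = cS ^ k := mul_one _)
  have intS1 : Integrable S μ := integrable_of_abs_le S hS cS hSbd
  have intY1 : Integrable Y μ := integrable_of_abs_le Y hY 1 hYbd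
  have Emul : ∀ k l : ℕ, ∫ x, S x ^ k * Y x ^ l ∂μ
      = (∫ x, S x ^ k ∂μ) * (∫ x, Y x ^ l ∂μ) := fun k l =>
    (hindep k l).integral_fun_mul_eq_mul_integral (intS k).1 (intY l).1
  have ES1 : ∫ x, S x ^ 1 ∂μ = 0 := by simpa using hScent
  have EY1 : ∫ x, Y x ^ 1 ∂μ = 0 := by simpa using hYcent
  have EY2 : ∫ x, Y x ^ 2 ∂μ ≤ 1 := by
    calc ∫ x, Y x ^ 2 ∂μ ≤ ∫ _x, (1:ℝ) ∂μ := by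
          refine integral_mono (intY 2) (integrable_const 1) (fun x => ?_)
          have := hYbd x
          nlinarith [abs_nonneg (Y x), sq_abs (Y x)]
      _ = 1 := by simp
  have EY4 : ∫ x, Y x ^ 4 ∂μ ≤ 1 := by
    calc ∫ x, Y x ^ 4 ∂μ ≤ ∫ _x, (1:ℝ) ∂μ := by
          refine integral_mono (intY 4) (integrable_const 1) (fun x => ?_)
          have h := hYbd x
          have h4 : |Y x| ^ 4 ≤ 1 := by
            calc |Y x| ^ 4 ≤ 1 ^ 4 := pow_le_pow_left₀ (abs_nonneg _) h 4
              _ = 1 := one_pow 4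
          calc Y x ^ 4 = |Y x| ^ 4 := by
                rw [pow_abs, abs_of_nonneg (by positivity)]
            _ ≤ 1 := h4
      _ = 1 := by simp
  have EY2nn : 0 ≤ ∫ x, Y x ^ 2 ∂μ := integral_nonneg (fun x => by positivity)
  have ES2nn : 0 ≤ ∫ x, S x ^ 2 ∂μ := integral_nonneg (fun x => by positivity)
  refine ⟨?_, ?_, ?_⟩
  · rw [integral_add intY1 intS1, hYcent, hScent, add_zero]
  · have expand2 : (fun x => (Y x + S x)^2)
        = fun x => S x ^ 2 + (2*(S x ^ 1 * Y x ^ 1) + Y x ^ 2) := by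
      funext x; ring
    calc ∫ x, (Y x + S x)^2 ∂μ
        = ∫ x, (S x ^ 2 + (2*(S x ^ 1 * Y x ^ 1) + Y x ^ 2)) ∂μ := by rw [expand2]
      _ = (∫ x, S x ^ 2 ∂μ) + (2*(∫ x, S x ^ 1 * Y x ^ 1 ∂μ) + ∫ x, Y x ^ 2 ∂μ) := by
          rw [integral_add (intS 2)
              (show Integrable (fun x => 2*(S x ^ 1 * Y x ^ 1) + Y x ^ 2) μ from
                ((intSY 1 1).const_mul 2).add (intY 2)),
            integral_add
              (show Integrable (fun x => 2*(S x ^ 1 * Y x ^ 1)) μ from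
                (intSY 1 1).const_mul 2) (intY 2),
            integral_const_mul]
      _ = (∫ x, S x ^ 2 ∂μ) + ∫ x, Y x ^ 2 ∂μ := by
          rw [Emul 1 1, ES1, zero_mul, mul_zero, zero_add]
      _ ≤ m + 1 := add_le_add h2 EY2
  · have expand4 : (fun x => (Y x + S x)^4)
        = fun x => S x ^ 4 + (4*(S x ^ 3 * Y x ^ 1) + (6*(S x ^ 2 * Y x ^ 2)
            + (4*(S x ^ 1 * Y x ^ 3) + Y x ^ 4))) := by
      funext x; ring
    have hprod : (∫ x, S x ^ 2 ∂μ) * (∫ x, Y x ^ 2 ∂μ) ≤ m * 1 :=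
      mul_le_mul h2 EY2 EY2nn hm
    calc ∫ x, (Y x + S x)^4 ∂μ
        = ∫ x, (S x ^ 4 + (4*(S x ^ 3 * Y x ^ 1) + (6*(S x ^ 2 * Y x ^ 2)
            + (4*(S x ^ 1 * Y x ^ 3) + Y x ^ 4)))) ∂μ := by rw [expand4]
      _ = (∫ x, S x ^ 4 ∂μ) + (4*(∫ x, S x ^ 3 * Y x ^ 1 ∂μ)
            + (6*(∫ x, S x ^ 2 * Y x ^ 2 ∂μ)
            + (4*(∫ x, S x ^ 1 * Y x ^ 3 ∂μ) + ∫ x, Y x ^ 4 ∂μ))) := by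
          rw [integral_add (intS 4)
              (show Integrable (fun x => 4*(S x ^ 3 * Y x ^ 1) + (6*(S x ^ 2 * Y x ^ 2)
                  + (4*(S x ^ 1 * Y x ^ 3) + Y x ^ 4))) μ from
                ((intSY 3 1).const_mul 4).add
                  (((intSY 2 2).const_mul 6).add (((intSY 1 3).const_mul 4).add (intY 4)))),
            integral_add
              (show Integrable (fun x => 4*(S x ^ 3 * Y x ^ 1)) μ from
                (intSY 3 1).const_mul 4)
              (show Integrable (fun x => 6*(S x ^ 2 * Y x ^ 2)
                  + (4*(S x ^ 1 * Y x ^ 3) + Y x ^ 4)) μ from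
                ((intSY 2 2).const_mul 6).add (((intSY 1 3).const_mul 4).add (intY 4))),
            integral_add
              (show Integrable (fun x => 6*(S x ^ 2 * Y x ^ 2)) μ from
                (intSY 2 2).const_mul 6)
              (show Integrable (fun x => 4*(S x ^ 1 * Y x ^ 3) + Y x ^ 4) μ from
                ((intSY 1 3).const_mul 4).add (intY 4)),
            integral_add
              (show Integrable (fun x => 4*(S x ^ 1 * Y x ^ 3)) μ from
                (intSY 1 3).const_mul 4) (intY 4),
            integral_const_mul, integral_const_mul, integral_const_mul]
      _ = (∫ x, S x ^ 4 ∂μ) + (6*((∫ x, S x ^ 2 ∂μ) * (∫ x, Y x ^ 2 ∂μ))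
            + ∫ x, Y x ^ 4 ∂μ) := by
          rw [Emul 3 1, Emul 2 2, Emul 1 3, ES1, EY1]
          ring
      _ ≤ 3*m^2 + (6*(m*1) + 1) := by
          refine add_le_add h4 (add_le_add ?_ EY4)
          exact mul_le_mul_of_nonneg_left hprod (by norm_num)
      _ ≤ 3*(m+1)^2 := by nlinarith

lemma moment_bound (Z : ℕ → Ω → ℝ)
    (hind : iIndepFun Z μ)
    (hmeas : ∀ i, Measurable (Z i)) (hbd : ∀ i x, |Z i x| ≤ 1)
    (hcent : ∀ i, ∫ x, Z i x ∂μ = 0) (F : Finset ℕ) :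
    (∫ x, ∑ i ∈ F, Z i x ∂μ) = 0 ∧ (∫ x, (∑ i ∈ F, Z i x)^2 ∂μ) ≤ (F.card : ℝ) ∧
      (∫ x, (∑ i ∈ F, Z i x)^4 ∂μ) ≤ 3 * (F.card : ℝ)^2 := by
  classical
  induction F using Finset.induction_on with
  | empty => simp
  | @insert a F ha ih =>
    obtain ⟨ih0, ih2, ih4⟩ := ih
    set S : Ω → ℝ := fun x => ∑ i ∈ F, Z i x with hSdef
    have hSmeas : Measurable S := Finset.measurable_sum F (fun i _ => hmeas i)
    have hSbd : ∀ x, |S x| ≤ (F.card : ℝ) := fun x => by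
      calc |S x| ≤ ∑ i ∈ F, |Z i x| := Finset.abs_sum_le_sum_abs _ _
        _ ≤ ∑ _i ∈ F, (1:ℝ) := Finset.sum_le_sum (fun i _ => hbd i x)
        _ = (F.card : ℝ) := by simp
    have hSY : IndepFun S (Z a) μ := by
      have h := hind.indepFun_finset_sum_of_notMem hmeas ha
      rwa [show (∑ j ∈ F, Z j) = S from by funext x; simp [hSdef]] at h
    have hindep : ∀ k l : ℕ, IndepFun (fun x => S x ^ k) (fun x => Z a x ^ l) μ :=
      fun k l => hSY.comp (measurable_id.pow_const k) (measurable_id.pow_const l)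
    have step := step_bound S (Z a) hSmeas (hmeas a) (F.card : ℝ) (by positivity)
      hSbd (hbd a) ih0 (hcent a) hindep (F.card : ℝ) (by positivity) ih2 ih4
    obtain ⟨s0, s2, s4⟩ := step
    have hcard : ((insert a F).card : ℝ) = (F.card : ℝ) + 1 := by
      rw [Finset.card_insert_of_notMem ha]; push_cast; ring
    refine ⟨?_, ?_, ?_⟩
    · simpa only [Finset.sum_insert ha] using s0
    · rw [hcard]; simpa only [Finset.sum_insert ha] using s2
    · rw [hcard]; simpa only [Finset.sum_insert ha] using s4

lemma ae_tendsto_zero (W : ℕ → Ω → ℝ) (hmeas : ∀ N, Measurable (W N))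
    (hint : ∀ N, Integrable (fun x => (W N x)^4) μ)
    (C : ℝ) (hC : 0 ≤ C) (h4 : ∀ N : ℕ, (∫ x, (W N x)^4 ∂μ) ≤ C / (N:ℝ)^2) :
    ∀ᵐ x ∂μ, Tendsto (fun N => W N x) atTop (nhds 0) := by
  have key : ∀ k : ℕ, ∀ᵐ x ∂μ, ∀ᶠ N in atTop, |W N x| < 1/((k:ℝ)+1) := by
    intro k
    set ε : ℝ := 1/((k:ℝ)+1) with hεdef
    have hε0 : 0 < ε := by positivity
    set E : ℕ → Set Ω := fun N => {x | ε ≤ |W N x|} with hEdef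
    have hmark : ∀ N, μ (E N) ≤ ENNReal.ofReal ((C / ε^4) * (1/(N:ℝ)^2)) := by
      intro N
      have hsub : E N ⊆ {x | ε^4 ≤ (W N x)^4} := by
        intro x hx
        have hx' : ε ≤ |W N x| := hx
        have : ε^4 ≤ |W N x|^4 := pow_le_pow_left₀ hε0.le hx' 4
        have habs : |W N x|^4 = (W N x)^4 := by
          rw [pow_abs, abs_of_nonneg (by positivity)]
        simpa [habs] using this
      have hmk := mul_meas_ge_le_integral_of_nonneg
        (ae_of_all μ (fun x => by positivity : ∀ x, 0 ≤ (W N x)^4)) (hint N) (ε^4)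
      have htr : (μ {x | ε^4 ≤ (W N x)^4}).toReal ≤ (C / (N:ℝ)^2) / ε^4 := by
        rw [le_div_iff₀ (by positivity)]
        calc (μ {x | ε^4 ≤ (W N x)^4}).toReal * ε^4
            = ε^4 * (μ {x | ε^4 ≤ (W N x)^4}).toReal := mul_comm _ _
          _ ≤ ∫ x, (W N x)^4 ∂μ := hmk
          _ ≤ C / (N:ℝ)^2 := h4 N
      calc μ (E N) ≤ μ {x | ε^4 ≤ (W N x)^4} := measure_mono hsub
        _ = ENNReal.ofReal ((μ {x | ε^4 ≤ (W N x)^4}).toReal) :=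
            (ENNReal.ofReal_toReal (measure_ne_top μ _)).symm
        _ ≤ ENNReal.ofReal ((C / (N:ℝ)^2) / ε^4) := ENNReal.ofReal_le_ofReal htr
        _ = ENNReal.ofReal ((C / ε^4) * (1/(N:ℝ)^2)) := by
            congr 1; field_simp
    have hsum : Summable (fun N : ℕ => (C / ε^4) * (1/(N:ℝ)^2)) :=
      (Real.summable_one_div_nat_pow.mpr one_lt_two).mul_left _
    have htsum : (∑' N, μ (E N)) ≠ ⊤ := by
      have h1 : (∑' N, μ (E N)) ≤ ∑' N : ℕ, ENNReal.ofReal ((C / ε^4) * (1/(N:ℝ)^2)) :=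
        ENNReal.tsum_le_tsum hmark
      have h2 : (∑' N : ℕ, ENNReal.ofReal ((C / ε^4) * (1/(N:ℝ)^2)))
          = ENNReal.ofReal (∑' N : ℕ, (C / ε^4) * (1/(N:ℝ)^2)) :=
        (ENNReal.ofReal_tsum_of_nonneg (fun N => by positivity) hsum).symm
      exact ne_top_of_le_ne_top (by rw [h2]; exact ENNReal.ofReal_ne_top) h1
    filter_upwards [MeasureTheory.ae_eventually_notMem htsum] with x hx
    filter_upwards [hx] with N hN
    exact not_le.mp hN
  filter_upwards [ae_all_iff.mpr key] with x hx
  rw [Metric.tendsto_atTop]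
  intro δ hδ
  obtain ⟨k, hk⟩ := exists_nat_one_div_lt hδ
  obtain ⟨N₀, hN₀⟩ := eventually_atTop.mp (hx k)
  refine ⟨N₀, fun n hn => ?_⟩
  rw [Real.dist_eq, sub_zero]
  exact lt_trans (hN₀ n hn) hk

lemma integral_bernoulli (X : Ω → ℝ) (hX : Measurable X) (h01 : ∀ x, X x = 0 ∨ X x = 1)
    (q : ℝ) (hq : 0 ≤ q) (hlaw : μ {x | X x = 1} = ENNReal.ofReal q) :
    ∫ x, X x ∂μ = q := by
  have hset : MeasurableSet {x | X x = 1} := hX (measurableSet_singleton 1)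
  have hrepr : (fun x => X x) = fun x => Set.indicator {x | X x = 1} (fun _ => (1:ℝ)) x := by
    funext x
    rcases h01 x with h0 | h1
    · simp [Set.indicator_apply, Set.mem_setOf_eq, h0]
    · simp [Set.indicator_apply, Set.mem_setOf_eq, h1]
  rw [hrepr, integral_indicator_const (1:ℝ) hset, measureReal_def, hlaw, ENNReal.toReal_ofReal hq,
    smul_eq_mul, mul_one]

lemma main_part (X : ℕ → ℕ → Ω → ℝ)
    (hmeas : ∀ N i, Measurable (X N i))
    (hind : ∀ N, iIndepFun (X N) μ)
    (h01 : ∀ N i x, X N i x = 0 ∨ X N i x = 1)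
    (q : ℝ) (hq0 : 0 ≤ q) (hq1 : q ≤ 1)
    (hlaw : ∀ N i, μ {x | X N i x = 1} = ENNReal.ofReal q)
    (m : ℕ → ℕ) (c : ℝ) (hc : 0 ≤ c) (hmc : ∀ N, (m N : ℝ) ≤ c * N)
    (L : ℝ) (hL : Tendsto (fun N : ℕ => (m N : ℝ)/(N:ℝ)) atTop (nhds L)) :
    ∀ᵐ x ∂μ, Tendsto (fun N => (∑ i ∈ Finset.range (m N), X N (i+1) x)/(N:ℝ))
      atTop (nhds (L*q)) := by
  set Z : ℕ → ℕ → Ω → ℝ := fun N i x => X N i x - q with hZdef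
  have hZmeas : ∀ N i, Measurable (Z N i) := fun N i => (hmeas N i).sub measurable_const
  have hZbd : ∀ N i x, |Z N i x| ≤ 1 := by
    intro N i x
    rcases h01 N i x with h | h <;> rw [hZdef] <;> simp only [h] <;>
      rw [abs_le] <;> constructor <;> linarith
  have hZcent : ∀ N i, ∫ x, Z N i x ∂μ = 0 := by
    intro N i
    have hXint : Integrable (X N i) μ := by
      refine integrable_of_abs_le _ (hmeas N i) 1 (fun x => ?_)
      rcases h01 N i x with h | h <;> simp [h]
    have hEX : ∫ x, X N i x ∂μ = q :=
      integral_bernoulli (X N i) (hmeas N i) (h01 N i) q hq0 (hlaw N i)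
    rw [hZdef]
    simp only
    rw [integral_sub hXint (integrable_const q), hEX, integral_const]
    simp
  have hZind : ∀ N, iIndepFun (Z N) μ :=
    fun N => (hind N).comp (fun _ y => y - q) (fun _ => measurable_id.sub measurable_const)
  -- the centered partial sums
  set W : ℕ → Ω → ℝ := fun N x => (∑ i ∈ Finset.range (m N), Z N (i+1) x)/(N:ℝ) with hWdef
  have hWmeas : ∀ N, Measurable (W N) := fun N =>
    (Finset.measurable_sum _ (fun i _ => hZmeas N (i+1))).div_const _
  have hsum_eq : ∀ N x, ∑ i ∈ (Finset.range (m N)).image Nat.succ, Z N i x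
      = ∑ i ∈ Finset.range (m N), Z N (i+1) x := by
    intro N x
    rw [Finset.sum_image (fun a _ b _ h => Nat.succ_injective h)]
  have hcard : ∀ N, ((Finset.range (m N)).image Nat.succ).card = m N := by
    intro N
    rw [Finset.card_image_of_injective _ Nat.succ_injective, Finset.card_range]
  have hmom : ∀ N, (∫ x, (∑ i ∈ Finset.range (m N), Z N (i+1) x)^4 ∂μ)
      ≤ 3 * ((m N : ℝ))^2 := by
    intro N
    have h := (moment_bound (Z N) (hZind N) (hZmeas N) (hZbd N) (hZcent N)
      ((Finset.range (m N)).image Nat.succ)).2.2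
    rw [hcard N] at h
    simpa only [hsum_eq N] using h
  have hSbd : ∀ N x, |∑ i ∈ Finset.range (m N), Z N (i+1) x| ≤ (m N : ℝ) := by
    intro N x
    calc |∑ i ∈ Finset.range (m N), Z N (i+1) x|
        ≤ ∑ i ∈ Finset.range (m N), |Z N (i+1) x| := Finset.abs_sum_le_sum_abs _ _
      _ ≤ ∑ _i ∈ Finset.range (m N), (1:ℝ) := Finset.sum_le_sum (fun i _ => hZbd N (i+1) x)
      _ = (m N : ℝ) := by simp
  have hWbd : ∀ N x, |W N x| ≤ (m N : ℝ) := by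
    intro N x
    rw [hWdef]
    simp only
    rcases Nat.eq_zero_or_pos N with h | h
    · simp [h]
    · have hN1 : (1:ℝ) ≤ N := by exact_mod_cast h
      rw [abs_div, abs_of_nonneg (by positivity : (0:ℝ) ≤ (N:ℝ))]
      calc |∑ i ∈ Finset.range (m N), Z N (i+1) x| / (N:ℝ)
          ≤ |∑ i ∈ Finset.range (m N), Z N (i+1) x| := div_le_self (abs_nonneg _) hN1
        _ ≤ (m N : ℝ) := hSbd N x
  have hWint : ∀ N, Integrable (fun x => (W N x)^4) μ := fun N =>
    integrable_of_abs_le _ ((hWmeas N).pow_const 4) ((m N : ℝ)^4) (fun x => by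
      rw [abs_pow]; exact pow_le_pow_left₀ (abs_nonneg _) (hWbd N x) 4)
  have hW4 : ∀ N : ℕ, (∫ x, (W N x)^4 ∂μ) ≤ (3*c^2) / (N:ℝ)^2 := by
    intro N
    rcases Nat.eq_zero_or_pos N with h | h
    · have : W N = fun _ => 0 := by
        funext x; rw [hWdef]; simp [h]
      rw [this]
      simp
      positivity
    · have hNpos : (0:ℝ) < N := by exact_mod_cast h
      have heq : (fun x => (W N x)^4)
          = fun x => (∑ i ∈ Finset.range (m N), Z N (i+1) x)^4 / (N:ℝ)^4 := by
        funext x; rw [hWdef]; simp only; rw [div_pow]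
      rw [heq, integral_div]
      rw [div_le_div_iff₀ (by positivity) (by positivity)]
      have h1 : (∫ x, (∑ i ∈ Finset.range (m N), Z N (i+1) x)^4 ∂μ) ≤ 3 * ((m N : ℝ))^2 :=
        hmom N
      have h2 : (m N : ℝ)^2 ≤ (c*N)^2 := by
        apply pow_le_pow_left₀ (by positivity) (hmc N)
      nlinarith [sq_nonneg ((N:ℝ)^2), sq_nonneg (N:ℝ), hNpos]
  have hWten := ae_tendsto_zero W hWmeas hWint (3*c^2) (by positivity) hW4
  filter_upwards [hWten] with x hx
  have hdet : Tendsto (fun N : ℕ => ((m N : ℝ)/(N:ℝ)) * q) atTop (nhds (L*q)) :=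
    hL.mul_const q
  have hcomb := hx.add hdet
  rw [zero_add] at hcomb
  have heq : (fun N => (∑ i ∈ Finset.range (m N), X N (i+1) x)/(N:ℝ))
      = fun N => W N x + ((m N : ℝ)/(N:ℝ)) * q := by
    funext N
    rw [hWdef]
    simp only
    have hsum : ∑ i ∈ Finset.range (m N), Z N (i+1) x
        = (∑ i ∈ Finset.range (m N), X N (i+1) x) - (m N : ℝ) * q := by
      rw [hZdef]
      simp only
      rw [Finset.sum_sub_distrib, Finset.sum_const, Finset.card_range, nsmul_eq_mul]
    rw [hsum]
    rcases Nat.eq_zero_or_pos N with h | h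
    · simp [h]
    · have hN : (N:ℝ) ≠ 0 := Nat.cast_ne_zero.mpr h.ne'
      field_simp
      try ring
  rw [heq]
  exact hcomb

end Aux

/-- Law of large numbers for the boundary discrete Hammersley model, using the
increment decomposition of the last passage time along the west boundary and
the top row. -/
theorem stmt10 {Ω : Type*} [MeasurableSpace Ω] (μ : Measure Ω) [IsProbabilityMeasure μ]
    (p u : ℝ) (hp : p ∈ Set.Ioo (0:ℝ) 1) (hu : u ∈ Set.Ioo (0:ℝ) 1)
    (J : ℕ → Ω → ℝ) (I : ℕ → ℕ → Ω → ℝ)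
    (hJmeas : ∀ j, Measurable (J j)) (hImeas : ∀ i n, Measurable (I i n))
    (hJind : iIndepFun J μ)
    (hIind : ∀ n : ℕ, iIndepFun
      (fun i => I i n) μ)
    (hJ01 : ∀ j x, J j x = 0 ∨ J j x = 1)
    (hI01 : ∀ i n x, I i n x = 0 ∨ I i n x = 1)
    (hJlaw : ∀ j, μ {x | J j x = 1} = ENNReal.ofReal (p*(1-u)/(u+p*(1-u))))
    (hIlaw : ∀ i n, μ {x | I i n x = 1} = ENNReal.ofReal u)
    (s t : ℝ) (hs : 0 < s) (ht : 0 < t) :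
    ∀ᵐ x ∂μ, Tendsto (fun N : ℕ =>
        ((∑ j ∈ Finset.range ⌊(N:ℝ)*t⌋₊, J (j+1) x)
          + ∑ i ∈ Finset.range ⌊(N:ℝ)*s⌋₊, I (i+1) ⌊(N:ℝ)*t⌋₊ x) / (N:ℝ))
      atTop (nhds (s*u + t*(p*(1-u)/(u+p*(1-u))))) := by
  obtain ⟨hp0, hp1⟩ := hp
  obtain ⟨hu0, hu1⟩ := hu
  set q : ℝ := p*(1-u)/(u+p*(1-u)) with hqdef
  have hden : 0 < u + p*(1-u) := by nlinarith
  have hq0 : 0 ≤ q := by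
    apply div_nonneg _ hden.le
    nlinarith
  have hq1 : q ≤ 1 := by
    rw [hqdef, div_le_one hden]
    linarith
  -- floor asymptotics
  have hfloor : ∀ a : ℝ, 0 < a →
      Tendsto (fun N : ℕ => ((⌊(N:ℝ)*a⌋₊ : ℝ))/(N:ℝ)) atTop (nhds a) := by
    intro a ha
    have h := (tendsto_nat_floor_mul_div_atTop (a := a) ha.le).comp
      (tendsto_natCast_atTop_atTop (R := ℝ))
    convert h using 2 with N
    simp [Function.comp, mul_comm]
  have hmc : ∀ (a : ℝ), 0 ≤ a → ∀ N : ℕ, ((⌊(N:ℝ)*a⌋₊ : ℝ)) ≤ a * N := by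
    intro a ha N
    calc ((⌊(N:ℝ)*a⌋₊ : ℝ)) ≤ (N:ℝ)*a := Nat.floor_le (by positivity)
      _ = a * N := mul_comm _ _
  -- J part
  have hJpart : ∀ᵐ x ∂μ, Tendsto
      (fun N : ℕ => (∑ j ∈ Finset.range ⌊(N:ℝ)*t⌋₊, J (j+1) x)/(N:ℝ))
      atTop (nhds (t*q)) := by
    exact main_part (fun _ j => J j) (fun _ j => hJmeas j) (fun _ => hJind)
      (fun _ j x => hJ01 j x) q hq0 hq1 (fun _ j => hJlaw j)
      (fun N => ⌊(N:ℝ)*t⌋₊) t ht.le (hmc t ht.le) t (hfloor t ht)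
  -- I part
  have hIpart : ∀ᵐ x ∂μ, Tendsto
      (fun N : ℕ => (∑ i ∈ Finset.range ⌊(N:ℝ)*s⌋₊, I (i+1) ⌊(N:ℝ)*t⌋₊ x)/(N:ℝ))
      atTop (nhds (s*u)) := by
    exact main_part (fun N i => I i ⌊(N:ℝ)*t⌋₊) (fun N i => hImeas i _)
      (fun N => hIind _) (fun N i x => hI01 i _ x) u hu0.le hu1.le
      (fun N i => hIlaw i _) (fun N => ⌊(N:ℝ)*s⌋₊) s hs.le (hmc s hs.le) s (hfloor s hs)
  filter_upwards [hJpart, hIpart] with x h1 h2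
  have hcomb := h2.add h1
  have heq : (fun N : ℕ =>
      ((∑ j ∈ Finset.range ⌊(N:ℝ)*t⌋₊, J (j+1) x)
        + ∑ i ∈ Finset.range ⌊(N:ℝ)*s⌋₊, I (i+1) ⌊(N:ℝ)*t⌋₊ x) / (N:ℝ))
      = fun N : ℕ =>
        (∑ i ∈ Finset.range ⌊(N:ℝ)*s⌋₊, I (i+1) ⌊(N:ℝ)*t⌋₊ x)/(N:ℝ)
          + (∑ j ∈ Finset.range ⌊(N:ℝ)*t⌋₊, J (j+1) x)/(N:ℝ) := by
    funext N
    rw [add_div, add_comm]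
  rw [heq]
  exact hcomb
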